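/- Let ε be a random vector in ℝ^d with i.i.d. standard Gaussian coordinates, ξ a standard Gaussian real random variable independent of ε, Q a symmetric d×d real matrix, θ_0 ∈ ℝ^d, v := Q θ_0, and R̃ := −σ (v·ε) − (σ²/2)(ε^⊤ Q ε − Tr Q) + σ_ξ ξ. Then E[R̃ ε] = −σ v. Consequently, with σ_R := √(σ²‖v‖² + (σ⁴/2) Tr(Q²) + σ_ξ²) > 0 and step size α > 0, the mean single-step ES update E[Δθ] = (α/σ_R) E[R̃ ε] equals −(α σ / σ_R) v, i.e. it is aligned with the negative gradient direction scaled by the signal-to-noise ratio. -/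

import Mathlib

open MeasureTheory ProbabilityTheory Matrix

section ESAux
open Real Filter Set Topology NNReal ENNReal

lemma aux_ftc {F f : ℝ → ℝ} (hderiv : ∀ x, HasDerivAt F (f x) x) (hint : Integrable f)
    (htop : Tendsto F atTop (𝓝 0)) (hbot : Tendsto F atBot (𝓝 0)) :
    ∫ x, f x = 0 := by
  have h1 : ∫ x in Iic (0:ℝ), f x = F 0 - 0 :=
    integral_Iic_of_hasDerivAt_of_tendsto (hderiv 0).continuousAt.continuousWithinAt
      (fun x _ => hderiv x) hint.integrableOn hbot
  have h2 : ∫ x in Ioi (0:ℝ), f x = 0 - F 0 :=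
    integral_Ioi_of_hasDerivAt_of_tendsto (hderiv 0).continuousAt.continuousWithinAt
      (fun x _ => hderiv x) hint.integrableOn htop
  have h3 := intervalIntegral.integral_Iic_add_Ioi (b := (0:ℝ)) (μ := volume)
    hint.integrableOn hint.integrableOn
  linarith

lemma aux_integrable_pow_gauss (k : ℕ) :
    Integrable (fun x : ℝ => x ^ k * Real.exp (-x ^ 2 / 2)) := by
  have hg : Integrable (fun x : ℝ => Real.exp (-(1/4 : ℝ) * x ^ 2)) :=
    integrable_exp_neg_mul_sq (by norm_num)
  refine (hg.const_mul (k.factorial * Real.exp 4)).mono'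
    ((continuous_pow k).mul (by continuity)).aestronglyMeasurable
    (ae_of_all _ fun x => ?_)
  have h1 : |x| ^ k ≤ k.factorial * Real.exp |x| := by
    have h2 : |x| ^ k / k.factorial ≤ Real.exp |x| := by
      refine le_trans ?_ (Real.sum_le_exp_of_nonneg (abs_nonneg x) (k + 1))
      exact Finset.single_le_sum (f := fun i => |x| ^ i / i.factorial)
        (fun i _ => by positivity) (Finset.self_mem_range_succ k)
    have hk : (0:ℝ) < k.factorial := by exact_mod_cast k.factorial_pos
    rw [div_le_iff₀ hk] at h2
    linarith [h2]
  have h3 : |x| + (-x ^ 2 / 2) ≤ 4 + (-(1/4 : ℝ) * x ^ 2) := by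
    rcases le_or_gt |x| 4 with h | h
    · nlinarith [sq_nonneg x]
    · nlinarith [sq_abs x, abs_nonneg x]
  calc ‖x ^ k * Real.exp (-x ^ 2 / 2)‖ = |x| ^ k * Real.exp (-x ^ 2 / 2) := by
        rw [norm_mul, norm_pow, Real.norm_eq_abs, Real.norm_eq_abs,
          abs_of_pos (Real.exp_pos _)]
    _ ≤ (k.factorial * Real.exp |x|) * Real.exp (-x ^ 2 / 2) :=
        mul_le_mul_of_nonneg_right h1 (Real.exp_pos _).le
    _ = k.factorial * Real.exp (|x| + (-x ^ 2 / 2)) := by rw [Real.exp_add]; ring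
    _ ≤ k.factorial * Real.exp (4 + (-(1/4 : ℝ) * x ^ 2)) :=
        mul_le_mul_of_nonneg_left (Real.exp_le_exp.mpr h3) (by positivity)
    _ = (k.factorial * Real.exp 4) * Real.exp (-(1/4 : ℝ) * x ^ 2) := by
        rw [Real.exp_add]; ring

lemma aux_tendsto_top (k : ℕ) :
    Tendsto (fun x : ℝ => x ^ k * Real.exp (-x ^ 2 / 2)) atTop (𝓝 0) := by
  have h := rpow_mul_exp_neg_mul_sq_isLittleO_exp_neg (b := (1/2 : ℝ)) (by norm_num) (k : ℝ)
  have h2 : Tendsto (fun x : ℝ => Real.exp (-(1/2 : ℝ) * x)) atTop (𝓝 0) := by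
    have h4 : Tendsto (fun x : ℝ => -(1/2 : ℝ) * x) atTop atBot := by
      apply tendsto_id.const_mul_atTop_of_neg (by norm_num)
    exact Real.tendsto_exp_atBot.comp h4
  have h3 := h.tendsto_zero_of_tendsto h2
  refine h3.congr fun x => ?_
  rw [Real.rpow_natCast]
  ring_nf

lemma aux_tendsto_bot (k : ℕ) :
    Tendsto (fun x : ℝ => x ^ k * Real.exp (-x ^ 2 / 2)) atBot (𝓝 0) := by
  have h := (aux_tendsto_top k).comp tendsto_neg_atBot_atTop
  rcases Nat.even_or_odd k with hk | hk
  · refine h.congr fun x => ?_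
    simp [Function.comp, hk.neg_pow, neg_sq]
  · have h2 := h.neg
    rw [neg_zero] at h2
    refine h2.congr fun x => ?_
    simp only [Function.comp_apply, hk.neg_pow, neg_sq]
    ring

lemma aux_exp_tt : Tendsto (fun x : ℝ => Real.exp (-x ^ 2 / 2)) atTop (𝓝 0) := by
  simpa using aux_tendsto_top 0
lemma aux_exp_tb : Tendsto (fun x : ℝ => Real.exp (-x ^ 2 / 2)) atBot (𝓝 0) := by
  simpa using aux_tendsto_bot 0

lemma aux_hd_exp (x : ℝ) :
    HasDerivAt (fun y : ℝ => Real.exp (-y ^ 2 / 2)) (Real.exp (-x ^ 2 / 2) * (-x)) x := by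
  have h1 : HasDerivAt (fun y : ℝ => -y ^ 2 / 2) (-x) x := by
    have := ((hasDerivAt_pow 2 x).neg.div_const 2)
    norm_num at this
    exact this.congr_deriv (by ring)
  exact h1.exp

lemma gauss_int0 : ∫ x : ℝ, Real.exp (-x ^ 2 / 2) = Real.sqrt (2 * π) := by
  have h := integral_gaussian (1/2)
  rw [show π / (1/2 : ℝ) = 2 * π by ring] at h
  rw [← h]
  congr 1; funext x; ring_nf

lemma gauss_int1 : ∫ x : ℝ, x * Real.exp (-x ^ 2 / 2) = 0 := by
  refine aux_ftc (F := fun y => -Real.exp (-y ^ 2 / 2)) (fun x => ?_) ?_ ?_ ?_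
  · have := (aux_hd_exp x).neg
    exact this.congr_deriv (by ring)
  · simpa using aux_integrable_pow_gauss 1
  · simpa using aux_exp_tt.neg
  · simpa using aux_exp_tb.neg

lemma gauss_int2 : ∫ x : ℝ, x ^ 2 * Real.exp (-x ^ 2 / 2) = Real.sqrt (2 * π) := by
  have hf : Integrable (fun x : ℝ => x ^ 2 * Real.exp (-x ^ 2 / 2)) :=
    aux_integrable_pow_gauss 2
  have hg : Integrable (fun x : ℝ => Real.exp (-x ^ 2 / 2)) := by
    simpa using aux_integrable_pow_gauss 0
  have key : ∫ x : ℝ, (x ^ 2 * Real.exp (-x ^ 2 / 2) - Real.exp (-x ^ 2 / 2)) = 0 := by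
    refine aux_ftc (F := fun y => -y * Real.exp (-y ^ 2 / 2)) (fun x => ?_) (hf.sub hg) ?_ ?_
    · have := ((hasDerivAt_id' (x := x)).neg.mul (aux_hd_exp x))
      exact this.congr_deriv (by simp only [Pi.neg_apply]; ring)
    · have := (aux_tendsto_top 1).neg
      rw [neg_zero] at this
      refine this.congr fun x => by ring
    · have := (aux_tendsto_bot 1).neg
      rw [neg_zero] at this
      refine this.congr fun x => by ring
  rw [integral_sub hf hg, gauss_int0] at key
  linarith

lemma gauss_int3 : ∫ x : ℝ, x ^ 3 * Real.exp (-x ^ 2 / 2) = 0 := by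
  have hf : Integrable (fun x : ℝ => x ^ 3 * Real.exp (-x ^ 2 / 2)) :=
    aux_integrable_pow_gauss 3
  have hg : Integrable (fun x : ℝ => 2 * (x * Real.exp (-x ^ 2 / 2))) := by
    simpa using (aux_integrable_pow_gauss 1).const_mul 2
  have key : ∫ x : ℝ, (x ^ 3 * Real.exp (-x ^ 2 / 2) - 2 * (x * Real.exp (-x ^ 2 / 2))) = 0 := by
    refine aux_ftc (F := fun y => -y ^ 2 * Real.exp (-y ^ 2 / 2)) (fun x => ?_) (hf.sub hg) ?_ ?_
    · have := ((hasDerivAt_pow 2 x).neg.mul (aux_hd_exp x))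
      exact this.congr_deriv (by simp only [Pi.neg_apply]; ring)
    · have := (aux_tendsto_top 2).neg
      rw [neg_zero] at this
      refine this.congr fun x => by ring
    · have := (aux_tendsto_bot 2).neg
      rw [neg_zero] at this
      refine this.congr fun x => by ring
  rw [integral_sub hf hg, integral_const_mul, gauss_int1] at key
  linarith

lemma gaussianPDFReal_zero_one (x : ℝ) :
    gaussianPDFReal 0 1 x = (Real.sqrt (2 * π))⁻¹ * Real.exp (-x ^ 2 / 2) := by
  simp [gaussianPDFReal]

lemma integral_gauss_measure (g : ℝ → ℝ) :
    ∫ x, g x ∂(gaussianReal 0 1) = ∫ x, gaussianPDFReal 0 1 x * g x := by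
  rw [gaussianReal_of_var_ne_zero 0 one_ne_zero, gaussianPDF_def]
  rw [show (fun x => ENNReal.ofReal (gaussianPDFReal 0 1 x))
        = (fun x => ((gaussianPDFReal 0 1 x).toNNReal : ℝ≥0∞)) from rfl]
  rw [integral_withDensity_eq_integral_smul
    ((measurable_gaussianPDFReal 0 1).real_toNNReal) g]
  congr 1; funext x
  simp [NNReal.smul_def, Real.coe_toNNReal _ (gaussianPDFReal_nonneg 0 1 x)]

lemma integrable_gauss_iff (g : ℝ → ℝ) :
    Integrable g (gaussianReal 0 1) ↔
      Integrable (fun x => gaussianPDFReal 0 1 x * g x) := by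
  rw [gaussianReal_of_var_ne_zero 0 one_ne_zero, gaussianPDF_def]
  rw [show (fun x => ENNReal.ofReal (gaussianPDFReal 0 1 x))
        = (fun x => ((gaussianPDFReal 0 1 x).toNNReal : ℝ≥0∞)) from rfl]
  rw [integrable_withDensity_iff_integrable_smul
    ((measurable_gaussianPDFReal 0 1).real_toNNReal)]
  constructor <;> intro h <;> refine h.congr (ae_of_all _ fun x => ?_) <;>
    simp [NNReal.smul_def, Real.coe_toNNReal _ (gaussianPDFReal_nonneg 0 1 x)]

lemma gauss_moment_integrable (k : ℕ) :
    Integrable (fun t : ℝ => t ^ k) (gaussianReal 0 1) := by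
  rw [integrable_gauss_iff]
  have := (aux_integrable_pow_gauss k).const_mul (Real.sqrt (2 * π))⁻¹
  refine this.congr (ae_of_all _ fun x => ?_)
  simp only [gaussianPDFReal_zero_one]
  ring

lemma gauss_moment_eval (k : ℕ) :
    ∫ t : ℝ, t ^ k ∂(gaussianReal 0 1)
      = (Real.sqrt (2 * π))⁻¹ * ∫ x : ℝ, x ^ k * Real.exp (-x ^ 2 / 2) := by
  rw [integral_gauss_measure, ← integral_const_mul]
  congr 1; funext x
  rw [gaussianPDFReal_zero_one]; ring

lemma sqrt_two_pi_pos : 0 < Real.sqrt (2 * π) :=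
  Real.sqrt_pos.mpr (by positivity)

lemma gm0 : ∫ t : ℝ, t ^ 0 ∂(gaussianReal 0 1) = 1 := by simp
lemma gm1 : ∫ t : ℝ, t ^ 1 ∂(gaussianReal 0 1) = 0 := by
  rw [gauss_moment_eval]
  simp_rw [pow_one, gauss_int1, mul_zero]
lemma gm2 : ∫ t : ℝ, t ^ 2 ∂(gaussianReal 0 1) = 1 := by
  rw [gauss_moment_eval, gauss_int2, inv_mul_cancel₀ sqrt_two_pi_pos.ne']
lemma gm3 : ∫ t : ℝ, t ^ 3 ∂(gaussianReal 0 1) = 0 := by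
  rw [gauss_moment_eval, gauss_int3, mul_zero]

lemma pi_monomial (d : ℕ) (n : Fin d → ℕ) :
    Integrable (fun x : Fin d → ℝ => ∏ i, x i ^ n i)
        (Measure.pi fun _ : Fin d => gaussianReal 0 1) ∧
    ∫ x : Fin d → ℝ, ∏ i, x i ^ n i ∂(Measure.pi fun _ : Fin d => gaussianReal 0 1)
      = ∏ i, ∫ t : ℝ, t ^ n i ∂(gaussianReal 0 1) := by
  letI : MeasureSpace ℝ := ⟨gaussianReal 0 1⟩
  haveI : SigmaFinite (volume : Measure ℝ) := by
    show SigmaFinite (gaussianReal 0 1); infer_instance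
  constructor
  · exact Integrable.fintype_prod (f := fun (i : Fin d) (t : ℝ) => t ^ n i)
      (fun i => gauss_moment_integrable (n i))
  · exact MeasureTheory.integral_fintype_prod_eq_prod (ι := Fin d)
      (fun (i : Fin d) (t : ℝ) => t ^ n i)

lemma prod_pow_single (d : ℕ) (a : Fin d) (x : Fin d → ℝ) :
    ∏ i, x i ^ (if i = a then 1 else 0) = x a := by
  have h : ∀ i ∈ Finset.univ, x i ^ (if i = a then 1 else 0)
      = if i = a then x i else 1 := fun i _ => by split <;> simp
  rw [Finset.prod_congr rfl h, Finset.prod_ite_eq' Finset.univ a x]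
  simp

lemma pi_int_coord (d : ℕ) (j : Fin d) :
    Integrable (fun x : Fin d → ℝ => x j) (Measure.pi fun _ : Fin d => gaussianReal 0 1) ∧
    ∫ x : Fin d → ℝ, x j ∂(Measure.pi fun _ : Fin d => gaussianReal 0 1) = 0 := by
  obtain ⟨hi, he⟩ := pi_monomial d (fun i => if i = j then 1 else 0)
  have hfun : (fun x : Fin d → ℝ => ∏ i, x i ^ (if i = j then 1 else 0))
      = fun x : Fin d → ℝ => x j := by
    funext x; exact prod_pow_single d j x
  rw [hfun] at hi he
  refine ⟨hi, he.trans ?_⟩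
  refine Finset.prod_eq_zero (Finset.mem_univ j) ?_
  simp only [if_pos rfl]
  exact gm1

lemma pi_int_pair (d : ℕ) (a b : Fin d) :
    Integrable (fun x : Fin d → ℝ => x a * x b)
        (Measure.pi fun _ : Fin d => gaussianReal 0 1) ∧
    ∫ x : Fin d → ℝ, x a * x b ∂(Measure.pi fun _ : Fin d => gaussianReal 0 1)
      = if a = b then 1 else 0 := by
  obtain ⟨hi, he⟩ := pi_monomial d
    (fun i => (if i = a then 1 else 0) + (if i = b then 1 else 0))
  have hfun : (fun x : Fin d → ℝ =>
        ∏ i, x i ^ ((if i = a then 1 else 0) + (if i = b then 1 else 0)))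
      = fun x : Fin d → ℝ => x a * x b := by
    funext x
    simp_rw [pow_add]
    rw [Finset.prod_mul_distrib, prod_pow_single d a x, prod_pow_single d b x]
  rw [hfun] at hi he
  refine ⟨hi, he.trans ?_⟩
  by_cases hab : a = b
  · subst hab
    simp only [if_pos rfl]
    refine Finset.prod_eq_one fun i _ => ?_
    by_cases hia : i = a
    · subst hia
      simp only [if_pos rfl]
      exact gm2
    · simp only [if_neg hia, add_zero]
      exact gm0
  · rw [if_neg hab]
    refine Finset.prod_eq_zero (Finset.mem_univ a) ?_
    rw [if_pos rfl, if_neg hab]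
    exact gm1

lemma pi_int_triple (d : ℕ) (a b j : Fin d) :
    Integrable (fun x : Fin d → ℝ => x a * x b * x j)
        (Measure.pi fun _ : Fin d => gaussianReal 0 1) ∧
    ∫ x : Fin d → ℝ, x a * x b * x j ∂(Measure.pi fun _ : Fin d => gaussianReal 0 1)
      = 0 := by
  obtain ⟨hi, he⟩ := pi_monomial d
    (fun i => (if i = a then 1 else 0) + (if i = b then 1 else 0) + (if i = j then 1 else 0))
  have hfun : (fun x : Fin d → ℝ => ∏ i, x i ^
        ((if i = a then 1 else 0) + (if i = b then 1 else 0) + (if i = j then 1 else 0)))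
      = fun x : Fin d → ℝ => x a * x b * x j := by
    funext x
    simp_rw [pow_add]
    rw [Finset.prod_mul_distrib, Finset.prod_mul_distrib,
      prod_pow_single d a x, prod_pow_single d b x, prod_pow_single d j x]
  rw [hfun] at hi he
  refine ⟨hi, he.trans ?_⟩
  by_cases hab : a = b
  · subst hab
    by_cases haj : a = j
    · subst haj
      refine Finset.prod_eq_zero (Finset.mem_univ a) ?_
      simp only [if_pos rfl]
      exact gm3
    · refine Finset.prod_eq_zero (Finset.mem_univ j) ?_
      have h1 : ¬ (j = a) := fun h => haj h.symm
      simp only [if_neg h1, if_pos rfl]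
      simpa using gm1
  · by_cases haj : a = j
    · subst haj
      refine Finset.prod_eq_zero (Finset.mem_univ b) ?_
      have h1 : ¬ (b = a) := fun h => hab h.symm
      simp only [if_neg h1, if_pos rfl]
      simpa using gm1
    · refine Finset.prod_eq_zero (Finset.mem_univ a) ?_
      simp only [if_pos rfl, if_neg hab, if_neg haj]
      simpa using gm1

end ESAux

/-- **Mean ES update on a quadratic landscape.**
With `ε` an i.i.d. standard Gaussian vector in `ℝ^d`, `ξ` a standard Gaussian scalar
independent of `ε`, `Q` symmetric, `v = Q θ₀`, and centered observed reward
`R̃ = −σ (v·ε) − (σ²/2)(ε^⊤ Q ε − Tr Q) + σ_ξ ξ`, we have `E[R̃ ε] = −σ v`.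
Consequently, with `σ_R = √(σ²‖v‖² + (σ⁴/2) Tr(Q²) + σ_ξ²) > 0` and step size `α > 0`,
the mean single-step ES update `E[Δθ] = (α/σ_R) E[R̃ ε]` equals `−(ασ/σ_R) v`. -/
theorem es_quadratic_landscape_mean_update
    {Ω : Type*} [MeasurableSpace Ω] (μ : Measure Ω) [IsProbabilityMeasure μ]
    (d : ℕ) (Q : Matrix (Fin d) (Fin d) ℝ) (hQ : Q.IsSymm)
    (θ₀ v : Fin d → ℝ) (hv : v = Q.mulVec θ₀)
    (α σ σξ σR : ℝ) (hα : 0 < α) (hσ : 0 < σ) (hσξ : 0 ≤ σξ)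
    (hσR : σR = Real.sqrt (σ ^ 2 * (∑ j, v j ^ 2)
        + σ ^ 4 / 2 * Matrix.trace (Q * Q) + σξ ^ 2))
    (hσRpos : 0 < σR)
    (ε : Ω → (Fin d → ℝ)) (ξ : Ω → ℝ)
    (hεmeas : Measurable ε) (hξmeas : Measurable ξ)
    (hεdist : Measure.map ε μ = Measure.pi (fun _ : Fin d => gaussianReal 0 1))
    (hξdist : Measure.map ξ μ = gaussianReal 0 1)
    (hindep : IndepFun ε ξ μ)
    (Rtilde : Ω → ℝ)
    (hRtilde : ∀ ω, Rtilde ω = -σ * (∑ j, v j * ε ω j)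
        - σ ^ 2 / 2 * ((∑ a, ∑ b, Q a b * ε ω a * ε ω b) - Matrix.trace Q)
        + σξ * ξ ω) :
    (∀ j, ∫ ω, Rtilde ω * ε ω j ∂μ = -σ * v j) ∧
    (∀ j, (α / σR) * ∫ ω, Rtilde ω * ε ω j ∂μ = -(α * σ / σR) * v j) := by
  have main : ∀ j, ∫ ω, Rtilde ω * ε ω j ∂μ = -σ * v j := by
    intro j
    -- transfer lemma
    have key : ∀ g : (Fin d → ℝ) → ℝ, Measurable g →
        Integrable g (Measure.pi fun _ : Fin d => gaussianReal 0 1) →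
        Integrable (fun ω => g (ε ω)) μ ∧
        ∫ ω, g (ε ω) ∂μ = ∫ x, g x ∂(Measure.pi fun _ : Fin d => gaussianReal 0 1) := by
      intro g hg hgint
      rw [← hεdist] at hgint
      refine ⟨(integrable_map_measure hg.aestronglyMeasurable hεmeas.aemeasurable).mp hgint, ?_⟩
      rw [← hεdist]
      exact (integral_map hεmeas.aemeasurable hg.aestronglyMeasurable).symm
    -- piece 1
    have hmeas1 : Measurable (fun x : Fin d → ℝ => ∑ k, v k * (x k * x j)) :=
      Finset.measurable_sum _ fun k _ =>
        (measurable_const.mul ((measurable_pi_apply k).mul (measurable_pi_apply j)))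
    have hint1 : Integrable (fun x : Fin d → ℝ => ∑ k, v k * (x k * x j))
        (Measure.pi fun _ : Fin d => gaussianReal 0 1) :=
      integrable_finset_sum _ fun k _ => (pi_int_pair d k j).1.const_mul (v k)
    obtain ⟨hI1, hE1⟩ := key _ hmeas1 hint1
    have hV1 : ∫ x : Fin d → ℝ, (∑ k, v k * (x k * x j))
        ∂(Measure.pi fun _ : Fin d => gaussianReal 0 1) = v j := by
      rw [integral_finset_sum _ fun k _ => (pi_int_pair d k j).1.const_mul (v k)]
      have : ∀ k, ∫ x : Fin d → ℝ, v k * (x k * x j)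
          ∂(Measure.pi fun _ : Fin d => gaussianReal 0 1)
          = if k = j then v k else 0 := by
        intro k
        rw [integral_const_mul, (pi_int_pair d k j).2]
        split <;> simp
      simp_rw [this]
      simp
    -- piece 2
    have hmeas2 : Measurable (fun x : Fin d → ℝ => ∑ a, ∑ b, Q a b * (x a * x b * x j)) :=
      Finset.measurable_sum _ fun a _ => Finset.measurable_sum _ fun b _ =>
        measurable_const.mul (((measurable_pi_apply a).mul (measurable_pi_apply b)).mul
          (measurable_pi_apply j))
    have hint2 : Integrable (fun x : Fin d → ℝ => ∑ a, ∑ b, Q a b * (x a * x b * x j))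
        (Measure.pi fun _ : Fin d => gaussianReal 0 1) :=
      integrable_finset_sum _ fun a _ => integrable_finset_sum _ fun b _ =>
        (pi_int_triple d a b j).1.const_mul (Q a b)
    obtain ⟨hI2, hE2⟩ := key _ hmeas2 hint2
    have hV2 : ∫ x : Fin d → ℝ, (∑ a, ∑ b, Q a b * (x a * x b * x j))
        ∂(Measure.pi fun _ : Fin d => gaussianReal 0 1) = 0 := by
      rw [integral_finset_sum _ fun a _ => integrable_finset_sum _ fun b _ =>
        (pi_int_triple d a b j).1.const_mul (Q a b)]
      refine Finset.sum_eq_zero fun a _ => ?_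
      rw [integral_finset_sum _ fun b _ => (pi_int_triple d a b j).1.const_mul (Q a b)]
      refine Finset.sum_eq_zero fun b _ => ?_
      rw [integral_const_mul, (pi_int_triple d a b j).2, mul_zero]
    -- piece 3
    obtain ⟨hI3, hE3⟩ := key _ (measurable_pi_apply j) (pi_int_coord d j).1
    have hV3 : ∫ ω, ε ω j ∂μ = 0 := hE3.trans (pi_int_coord d j).2
    -- piece 4 : the ξ term
    have hξint : Integrable ξ μ := by
      have hid : Integrable id (gaussianReal 0 1) := by
        simpa [Function.id_def] using gauss_moment_integrable 1
      rw [← hξdist] at hid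
      exact (integrable_map_measure aestronglyMeasurable_id hξmeas.aemeasurable).mp hid
    have hindep' : IndepFun (fun ω => ε ω j) ξ μ :=
      hindep.comp (measurable_pi_apply j) measurable_id
    have hI4 : Integrable (fun ω => ξ ω * ε ω j) μ := by
      have := hindep'.integrable_mul hI3 hξint
      refine this.congr (ae_of_all _ fun ω => ?_)
      simp [mul_comm]
    have hV4 : ∫ ω, ξ ω * ε ω j ∂μ = 0 := by
      have h := hindep'.integral_mul_eq_mul_integral hI3.aestronglyMeasurable hξint.aestronglyMeasurable
      have h2 : ∫ ω, ε ω j * ξ ω ∂μ = 0 := by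
        rw [show (fun ω => ε ω j) * ξ = fun ω => ε ω j * ξ ω from rfl] at h
        rw [h, hV3, zero_mul]
      rw [← h2]
      congr 1; funext ω; exact mul_comm _ _
    -- split the integrand
    have hsplit : (fun ω => Rtilde ω * ε ω j) = fun ω =>
        (-σ) * (∑ k, v k * (ε ω k * ε ω j))
        + (-(σ ^ 2 / 2)) * (∑ a, ∑ b, Q a b * (ε ω a * ε ω b * ε ω j))
        + (σ ^ 2 / 2 * Matrix.trace Q) * (ε ω j)
        + σξ * (ξ ω * ε ω j) := by
      funext ω
      rw [hRtilde ω]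
      have e1 : (∑ k, v k * ε ω k) * ε ω j = ∑ k, v k * (ε ω k * ε ω j) := by
        rw [Finset.sum_mul]; exact Finset.sum_congr rfl fun k _ => by ring
      have e2 : (∑ a, ∑ b, Q a b * ε ω a * ε ω b) * ε ω j
          = ∑ a, ∑ b, Q a b * (ε ω a * ε ω b * ε ω j) := by
        rw [Finset.sum_mul]
        refine Finset.sum_congr rfl fun a _ => ?_
        rw [Finset.sum_mul]
        exact Finset.sum_congr rfl fun b _ => by ring
      linear_combination (-σ) * e1 - σ ^ 2 / 2 * e2
    have hA : Integrable (fun ω => (-σ) * (∑ k, v k * (ε ω k * ε ω j))) μ := hI1.const_mul _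
    have hB : Integrable (fun ω =>
        (-(σ ^ 2 / 2)) * (∑ a, ∑ b, Q a b * (ε ω a * ε ω b * ε ω j))) μ := hI2.const_mul _
    have hC : Integrable (fun ω => (σ ^ 2 / 2 * Matrix.trace Q) * (ε ω j)) μ :=
      hI3.const_mul _
    have hD : Integrable (fun ω => σξ * (ξ ω * ε ω j)) μ := hI4.const_mul _
    have hAB : Integrable (fun ω => (-σ) * (∑ k, v k * (ε ω k * ε ω j))
        + (-(σ ^ 2 / 2)) * (∑ a, ∑ b, Q a b * (ε ω a * ε ω b * ε ω j))) μ := hA.add hB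
    have hABC : Integrable (fun ω => (-σ) * (∑ k, v k * (ε ω k * ε ω j))
        + (-(σ ^ 2 / 2)) * (∑ a, ∑ b, Q a b * (ε ω a * ε ω b * ε ω j))
        + (σ ^ 2 / 2 * Matrix.trace Q) * (ε ω j)) μ := hAB.add hC
    rw [hsplit, integral_add hABC hD, integral_add hAB hC, integral_add hA hB]
    rw [integral_const_mul, integral_const_mul, integral_const_mul, integral_const_mul]
    rw [hE1, hV1, hE2, hV2, hV3, hV4]
    ring
  refine ⟨main, fun j => ?_⟩
  rw [main j]
  ring
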